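/- Let q ∈ (1,∞), let (X, μ) be a measure space with μ a finite measure, and let a : X → ℝ be a bounded measurable function with a ≥ 0 μ-a.e. and ∫_X a dμ > 0. Let u ∈ L^q(X, μ) satisfy I_a(u) = 0, and let v : X → ℝ be a bounded measurable function. For each positive integer n, let s_n be the unique real number with I_a(u + v/n + s_n) = 0. Then the sequence (n·s_n)_{n≥1} is bounded. -/

import Mathlib

open MeasureTheory Real Filter Topology

/-- `Ia μ a q w = ∫ a |w|^{q-2} w dμ` (with `|t|^{q-2} t = 0` when `t = 0`,
which holds automatically for the real power since the factor `w x` vanishes). -/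
noncomputable def Ia {X : Type*} [MeasurableSpace X] (μ : Measure X) (a : X → ℝ) (q : ℝ)
    (w : X → ℝ) : ℝ :=
  ∫ x, a x * |w x| ^ (q - 2) * w x ∂μ

private lemma phi_eq_of_nonneg {q : ℝ} (hq : 1 < q) {t : ℝ} (ht : 0 ≤ t) :
    |t| ^ (q - 2) * t = t ^ (q - 1) := by
  rcases ht.eq_or_lt with h | h
  · simp [← h, Real.zero_rpow (by linarith : q - 1 ≠ 0)]
  · rw [abs_of_pos h, ← Real.rpow_add_one h.ne']
    ring_nf

private lemma phi_strictMono {q : ℝ} (hq : 1 < q) {s t : ℝ} (h : s < t) :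
    |s| ^ (q - 2) * s < |t| ^ (q - 2) * t := by
  have hq1 : (0:ℝ) < q - 1 := by linarith
  have neg_eq : ∀ r : ℝ, r ≤ 0 → |r| ^ (q - 2) * r = -((-r) ^ (q - 1)) := by
    intro r hr
    have : |r| = -r := abs_of_nonpos hr
    have h2 : |(-r)| ^ (q - 2) * (-r) = (-r) ^ (q - 1) :=
      phi_eq_of_nonneg hq (by linarith)
    rw [abs_of_nonneg (by linarith : (0:ℝ) ≤ -r)] at h2
    rw [this]
    nlinarith [h2]
  rcases le_or_gt 0 s with hs | hs
  · rw [phi_eq_of_nonneg hq hs, phi_eq_of_nonneg hq (hs.trans h.le)]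
    exact Real.rpow_lt_rpow hs h hq1
  · rcases le_or_gt 0 t with ht | ht
    · have hl : |s| ^ (q - 2) * s < 0 :=
        mul_neg_of_pos_of_neg (Real.rpow_pos_of_pos (abs_pos.2 hs.ne) _) hs
      have hr : 0 ≤ |t| ^ (q - 2) * t :=
        mul_nonneg (Real.rpow_nonneg (abs_nonneg _) _) ht
      linarith
    · rw [neg_eq s hs.le, neg_eq t ht.le]
      have : (-t) ^ (q - 1) < (-s) ^ (q - 1) :=
        Real.rpow_lt_rpow (by linarith) (by linarith) hq1
      linarith

private lemma integrable_phi {X : Type*} [MeasurableSpace X] (μ : Measure X)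
    [IsFiniteMeasure μ] {q : ℝ} (hq : 1 < q) {a : X → ℝ} (ha_meas : Measurable a)
    (ha_bdd : ∃ C : ℝ, ∀ x, |a x| ≤ C) {w : X → ℝ}
    (hw : MemLp w (ENNReal.ofReal q) μ) :
    Integrable (fun x => a x * |w x| ^ (q - 2) * w x) μ := by
  obtain ⟨C0, hC0'⟩ := ha_bdd
  set C : ℝ := max C0 0 with hCdef
  have hC : ∀ x, |a x| ≤ C := fun x => (hC0' x).trans (le_max_left _ _)
  have hC0 : 0 ≤ C := le_max_right _ _
  have hwm : AEMeasurable w μ := hw.1.aemeasurable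
  have hmeas : AEStronglyMeasurable (fun x => a x * |w x| ^ (q - 2) * w x) μ := by
    have : AEMeasurable (fun x => a x * |w x| ^ (q - 2) * w x) μ := by fun_prop
    exact this.aestronglyMeasurable
  have hq0 : ENNReal.ofReal q ≠ 0 := by
    simp [ENNReal.ofReal_eq_zero]; linarith
  have hA : Integrable (fun x => ‖w x‖ ^ q) μ := by
    have := hw.integrable_norm_rpow hq0 ENNReal.ofReal_ne_top
    simpa [ENNReal.toReal_ofReal (by linarith : (0:ℝ) ≤ q)] using this
  have hint : Integrable (fun x => C * (1 + ‖w x‖ ^ q)) μ := by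
    have := ((integrable_const (1:ℝ)).add hA).const_mul C
    simpa using this
  refine Integrable.mono' hint hmeas ?_
  filter_upwards with x
  have h1 : |w x| ^ (q - 2) * |w x| = |w x| ^ (q - 1) := by
    have := phi_eq_of_nonneg hq (abs_nonneg (w x))
    rwa [abs_abs] at this
  have h2 : |w x| ^ (q - 1) ≤ 1 + |w x| ^ q := by
    rcases le_or_gt (|w x|) 1 with h | h
    · have : |w x| ^ (q - 1) ≤ 1 :=
        Real.rpow_le_one (abs_nonneg _) h (by linarith)
      have : (0:ℝ) ≤ |w x| ^ q := Real.rpow_nonneg (abs_nonneg _) _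
      linarith [Real.rpow_le_one (abs_nonneg (w x)) h (by linarith : (0:ℝ) ≤ q - 1)]
    · have : |w x| ^ (q - 1) ≤ |w x| ^ q :=
        Real.rpow_le_rpow_of_exponent_le h.le (by linarith)
      linarith
  calc ‖a x * |w x| ^ (q - 2) * w x‖
      = |a x| * (|w x| ^ (q - 2) * |w x|) := by
        rw [norm_eq_abs, abs_mul, abs_mul,
          abs_of_nonneg (Real.rpow_nonneg (abs_nonneg (w x)) (q - 2))]
        ring
    _ = |a x| * |w x| ^ (q - 1) := by rw [h1]
    _ ≤ C * (1 + |w x| ^ q) := by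
        apply mul_le_mul (hC x) h2 (Real.rpow_nonneg (abs_nonneg _) _) hC0
    _ = C * (1 + ‖w x‖ ^ q) := by rw [norm_eq_abs]

/-- Key comparison: two functions with `Ia = 0` cannot be pointwise strictly ordered. -/
private lemma key_lemma {X : Type*} [MeasurableSpace X] (μ : Measure X) [IsFiniteMeasure μ]
    {q : ℝ} (hq : 1 < q) {a : X → ℝ} (ha_meas : Measurable a)
    (ha_bdd : ∃ C : ℝ, ∀ x, |a x| ≤ C) (ha_nonneg : ∀ᵐ x ∂μ, 0 ≤ a x)
    (ha_pos : 0 < ∫ x, a x ∂μ)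
    {f g : X → ℝ} (hf : MemLp f (ENNReal.ofReal q) μ) (hg : MemLp g (ENNReal.ofReal q) μ)
    (hfg : ∀ x, f x < g x) (hIf : Ia μ a q f = 0) (hIg : Ia μ a q g = 0) : False := by
  have hIntf := integrable_phi μ hq ha_meas ha_bdd hf
  have hIntg := integrable_phi μ hq ha_meas ha_bdd hg
  set F : X → ℝ := fun x =>
    a x * |g x| ^ (q - 2) * g x - a x * |f x| ^ (q - 2) * f x with hF
  have hFint : Integrable F μ := hIntg.sub hIntf
  have hFnonneg : 0 ≤ᵐ[μ] F := by
    filter_upwards [ha_nonneg] with x hx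
    have := phi_strictMono hq (hfg x)
    have : a x * (|f x| ^ (q - 2) * f x) ≤ a x * (|g x| ^ (q - 2) * g x) :=
      mul_le_mul_of_nonneg_left this.le hx
    simp only [hF, Pi.zero_apply]
    nlinarith
  have hF0 : ∫ x, F x ∂μ = 0 := by
    rw [integral_sub hIntg hIntf]
    have h1 : ∫ x, a x * |g x| ^ (q - 2) * g x ∂μ = 0 := hIg
    have h2 : ∫ x, a x * |f x| ^ (q - 2) * f x ∂μ = 0 := hIf
    rw [h1, h2, sub_zero]
  have hFz : F =ᵐ[μ] 0 := (integral_eq_zero_iff_of_nonneg_ae hFnonneg hFint).1 hF0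
  have haz : a =ᵐ[μ] 0 := by
    filter_upwards [hFz] with x hx
    have hlt := phi_strictMono hq (hfg x)
    have : a x * (|g x| ^ (q - 2) * g x - |f x| ^ (q - 2) * f x) = 0 := by
      simp only [hF, Pi.zero_apply] at hx; nlinarith [hx]
    rcases mul_eq_zero.1 this with h | h
    · exact h
    · exfalso; nlinarith
  have : ∫ x, a x ∂μ = 0 := by
    rw [integral_congr_ae haz]; simp
  linarith

theorem stmt6 {X : Type*} [MeasurableSpace X] (μ : Measure X) [IsFiniteMeasure μ]
    (q : ℝ) (hq : 1 < q) (a : X → ℝ) (ha_meas : Measurable a)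
    (ha_bdd : ∃ C : ℝ, ∀ x, |a x| ≤ C) (ha_nonneg : ∀ᵐ x ∂μ, 0 ≤ a x)
    (ha_pos : 0 < ∫ x, a x ∂μ)
    (u : X → ℝ) (hu : MemLp u (ENNReal.ofReal q) μ) (hu0 : Ia μ a q u = 0)
    (v : X → ℝ) (hv_meas : Measurable v) (hv_bdd : ∃ C : ℝ, ∀ x, |v x| ≤ C)
    (s : ℕ → ℝ)
    (hs : ∀ n : ℕ, 0 < n → Ia μ a q (fun x => u x + v x / n + s n) = 0) :
    ∃ M : ℝ, ∀ n : ℕ, 0 < n → |(n : ℝ) * s n| ≤ M := by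
  obtain ⟨C, hC⟩ := hv_bdd
  refine ⟨max C 0, fun n hn => ?_⟩
  by_contra hcon
  push_neg at hcon
  have hn0 : (0:ℝ) < n := by exact_mod_cast hn
  set w : X → ℝ := fun x => u x + v x / n + s n with hw
  have hwmem : MemLp w (ENNReal.ofReal q) μ := by
    have h2 : MemLp (fun x => v x / n + s n) (ENNReal.ofReal q) μ := by
      refine MemLp.of_bound ?_ (C / n + |s n|) ?_
      · exact ((hv_meas.div_const _).add_const _).aestronglyMeasurable
      · filter_upwards with x
        rw [norm_eq_abs]
        calc |v x / n + s n| ≤ |v x / n| + |s n| := abs_add_le _ _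
          _ ≤ C / n + |s n| := by
            have : |v x / n| = |v x| / n := by
              rw [abs_div, abs_of_pos hn0]
            rw [this]
            gcongr
            exact hC x
    have := hu.add h2
    convert this using 1
    ext x; simp [hw]; ring
  have hIw : Ia μ a q w = 0 := hs n hn
  rcases lt_abs.1 hcon with h | h
  · -- n * s n > max C 0 : then u < w pointwise
    refine key_lemma μ hq ha_meas ha_bdd ha_nonneg ha_pos hu hwmem (fun x => ?_) hu0 hIw
    have h1 : 0 < v x + (n : ℝ) * s n := by
      have := hC x
      have h2 : -C ≤ v x := neg_le_of_abs_le this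
      have : C ≤ max C 0 := le_max_left _ _
      linarith
    have : 0 < (v x + (n : ℝ) * s n) / n := div_pos h1 hn0
    have heq : v x / n + s n = (v x + (n : ℝ) * s n) / n := by
      field_simp
    simp only [hw]
    linarith [heq ▸ this]
  · -- n * s n < -(max C 0) : then w < u pointwise
    refine key_lemma μ hq ha_meas ha_bdd ha_nonneg ha_pos hwmem hu (fun x => ?_) hIw hu0
    have h1 : v x + (n : ℝ) * s n < 0 := by
      have := hC x
      have h2 : v x ≤ C := le_of_abs_le this
      have : C ≤ max C 0 := le_max_left _ _
      linarith
    have : (v x + (n : ℝ) * s n) / n < 0 := div_neg_of_neg_of_pos h1 hn0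
    have heq : v x / n + s n = (v x + (n : ℝ) * s n) / n := by
      field_simp
    simp only [hw]
    linarith [heq ▸ this]
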